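/- Let u satisfy the Riccati equation u' = u² + ν·u + K with constants ν > 0 and 0 < K < ν²/4. If the initial value u₀ satisfies u₀ < -ν/2 + √(ν²/4 - K) (i.e., u₀ is below the larger root of x² + νx + K = 0), then the solution u exists for all θ ≥ 0 and converges to the smaller root -ν/2 - √(ν²/4 - K) as θ → ∞. -/

import Mathlib

/-- For `0 < K < ν²/4` and initial value below the larger root of `x² + νx + K`,
the Riccati equation `u' = u² + νu + K` has a global solution converging to the
smaller root `-ν/2 - √(ν²/4 - K)`. -/
theorem stmt_5 (ν K u₀ : ℝ) (hν : 0 < ν) (hK0 : 0 < K) (hK : K < ν^2/4)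
    (hu₀ : u₀ < -ν/2 + Real.sqrt (ν^2/4 - K)) :
    ∃ u : ℝ → ℝ, u 0 = u₀ ∧
      (∀ θ, 0 ≤ θ → HasDerivAt u ((u θ)^2 + ν * u θ + K) θ) ∧
      Filter.Tendsto u Filter.atTop (nhds (-ν/2 - Real.sqrt (ν^2/4 - K))) := by
  set δ := Real.sqrt (ν^2/4 - K) with hδdef
  have hδ : 0 < δ := Real.sqrt_pos.2 (by linarith)
  have hδ2 : δ^2 = ν^2/4 - K := Real.sq_sqrt (by linarith)
  clear_value δ
  set r₁ : ℝ := -ν/2 - δ with hr₁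
  set r₂ : ℝ := -ν/2 + δ with hr₂
  clear_value r₁ r₂
  have hden : u₀ - r₂ < 0 := sub_neg.2 hu₀
  have hden' : u₀ - r₂ ≠ 0 := ne_of_lt hden
  set c : ℝ := (u₀ - r₁)/(u₀ - r₂) with hc
  clear_value c
  have hc1 : c < 1 := by
    have h : c - 1 = (2*δ)/(u₀ - r₂) := by
      rw [hc, div_sub_one hden']
      congr 1
      rw [hr₁, hr₂]; ring
    have : (2*δ)/(u₀ - r₂) < 0 := div_neg_of_pos_of_neg (by linarith) hden
    linarith
  refine ⟨fun θ => (r₁ - r₂ * (c * Real.exp (-(2*δ)*θ))) / (1 - c * Real.exp (-(2*δ)*θ)),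
    ?_, ?_, ?_⟩
  · simp only [mul_zero, neg_zero, zero_mul, Real.exp_zero, mul_one]
    have h1c : (1:ℝ) - c ≠ 0 := by linarith
    rw [div_eq_iff h1c, hc]
    field_simp
    ring
  · intro θ hθ
    set E := Real.exp (-(2*δ)*θ) with hE
    have hEpos : 0 < E := Real.exp_pos _
    have hE1 : E ≤ 1 := by
      rw [hE]
      apply Real.exp_le_one_iff.2
      have : 0 ≤ 2*δ*θ := by positivity
      linarith
    have hD : (1 : ℝ) - c * E ≠ 0 := by
      rcases le_or_gt c 0 with h | h
      · nlinarith
      · nlinarith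
    have hdE : HasDerivAt (fun θ : ℝ => Real.exp (-(2*δ)*θ)) (E * (-(2*δ))) θ := by
      have h1 : HasDerivAt (fun θ : ℝ => -(2*δ)*θ) (-(2*δ)) θ := by
        simpa using (hasDerivAt_id θ).const_mul (-(2*δ))
      simpa [hE] using h1.exp
    have hN : HasDerivAt (fun θ : ℝ => r₁ - r₂ * (c * Real.exp (-(2*δ)*θ)))
        (-(r₂ * (c * (E * (-(2*δ)))))) θ := ((hdE.const_mul c).const_mul r₂).const_sub r₁
    have hDd : HasDerivAt (fun θ : ℝ => 1 - c * Real.exp (-(2*δ)*θ))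
        (-(c * (E * (-(2*δ))))) θ := (hdE.const_mul c).const_sub 1
    have := hN.div hDd hD
    have expand : ∀ n d : ℝ, d ≠ 0 → (n/d)^2 + ν*(n/d) + K = (n^2 + ν*n*d + K*d^2)/d^2 := by
      intro n d hd
      field_simp
    refine this.congr_deriv ?_
    symm
    beta_reduce
    rw [← hE]
    clear_value E
    subst hr₁ hr₂
    rw [expand _ _ hD]
    congr 1
    linear_combination (1 - c*E)^2 * hδ2
  · have hEtend : Filter.Tendsto (fun θ : ℝ => Real.exp (-(2*δ)*θ)) Filter.atTop (nhds 0) := by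
      apply Real.tendsto_exp_atBot.comp
      exact (Filter.tendsto_id.const_mul_atTop_of_neg (by linarith)).comp Filter.tendsto_id
    have h1 : Filter.Tendsto (fun θ : ℝ => r₁ - r₂ * (c * Real.exp (-(2*δ)*θ)))
        Filter.atTop (nhds r₁) := by
      have := ((hEtend.const_mul c).const_mul r₂).const_sub r₁
      simpa using this
    have h2 : Filter.Tendsto (fun θ : ℝ => 1 - c * Real.exp (-(2*δ)*θ))
        Filter.atTop (nhds 1) := by
      have := (hEtend.const_mul c).const_sub 1
      simpa using this
    have := h1.div h2 one_ne_zero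
    simpa [hr₁, Pi.div_def] using this
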